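/- Let λ > 0 and Q_t > Q_h > 0 be real numbers, and define w(Γ) = exp(−Γ·(Q_t − Q_h)/λ)·(Γ·Q_t + λ)/(Γ·Q_h + λ) for Γ ≥ 0. Then w(Γ) ≤ 1 for every Γ ≥ 0, with equality if and only if Γ = 0; that is, as fixed gas costs drop to zero, the low-fee pool captures the full liquidity market share. -/

import Mathlib

/-- The liquidity market share of the low-fee pool,
`w(Γ) = exp(−Γ·(Q_t − Q_h)/λ)·(Γ·Q_t + λ)/(Γ·Q_h + λ)`, satisfies `w(Γ) ≤ 1` for all
`Γ ≥ 0`, with equality if and only if `Γ = 0`. -/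
theorem low_fee_market_share_le_one
    (lam Qt Qh : ℝ) (hlam : 0 < lam) (hQh : 0 < Qh) (hQ : Qh < Qt) :
    ∀ Γ : ℝ, 0 ≤ Γ →
      Real.exp (-Γ * (Qt - Qh) / lam) * (Γ * Qt + lam) / (Γ * Qh + lam) ≤ 1 ∧
      (Real.exp (-Γ * (Qt - Qh) / lam) * (Γ * Qt + lam) / (Γ * Qh + lam) = 1 ↔ Γ = 0) := by
  intro Γ hΓ
  rcases eq_or_lt_of_le hΓ with h0 | h0
  · subst h0
    simp [div_self hlam.ne']
  · have hden : 0 < Γ * Qh + lam := by positivity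
    set x := Γ * (Qt - Qh) / lam with hx
    have hxpos : 0 < x := by
      apply div_pos _ hlam
      exact mul_pos h0 (by linarith)
    have hexp : 1 + x < Real.exp x := by
      have := Real.add_one_lt_exp (ne_of_gt hxpos)
      linarith
    have key : Γ * Qt + lam < Real.exp x * (Γ * Qh + lam) := by
      have h1 : (1 + x) * (Γ * Qh + lam) < Real.exp x * (Γ * Qh + lam) :=
        mul_lt_mul_of_pos_right hexp hden
      have h2 : Γ * Qt + lam ≤ (1 + x) * (Γ * Qh + lam) := by
        have hxl : x * lam = Γ * (Qt - Qh) := by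
          rw [hx, div_mul_cancel₀ _ hlam.ne']
        nlinarith [mul_nonneg (mul_nonneg hΓ hQh.le) hxpos.le]
      linarith
    have harg : -Γ * (Qt - Qh) / lam = -x := by
      rw [hx]; ring
    have hlt : Real.exp (-Γ * (Qt - Qh) / lam) * (Γ * Qt + lam) / (Γ * Qh + lam) < 1 := by
      rw [div_lt_one hden, harg, Real.exp_neg]
      rw [inv_mul_lt_iff₀ (Real.exp_pos x)] at *
      · exact key
    refine ⟨hlt.le, ?_, fun h => absurd h (ne_of_gt h0)⟩
    intro h; linarith [hlt.le, h.ge, hlt]
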